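/- If a continuously differentiable function S satisfies S'(t) = Λ - μS(t) - β(1-σ)S(t)I(t) + ξR(t) where Λ, μ, β, ξ ≥ 0, σ ≤ 1, and I(t), R(t) ≥ 0 for all t ≥ 0, and S(0) ≥ 0, then S(t) ≥ 0 for all t ≥ 0. -/

import Mathlib

/-- Positivity of the susceptible compartment `S` in the SEIRS model:
if `S` is continuously differentiable with
`S' t = Λ - μ S t - β (1-σ) S t * I t + ξ R t`, where `Λ, μ, β, ξ ≥ 0`,
`σ ≤ 1`, `I t, R t ≥ 0` for `t ≥ 0`, and `S 0 ≥ 0`, then `S t ≥ 0` for all `t ≥ 0`. -/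
theorem stmt_0 (S I R : ℝ → ℝ) (Λ μ β σ ξ : ℝ)
    (hS : ContDiff ℝ 1 S)
    (hΛ : 0 ≤ Λ) (hμ : 0 ≤ μ) (hβ : 0 ≤ β) (hσ : σ ≤ 1) (hξ : 0 ≤ ξ)
    (hI : ∀ t, 0 ≤ t → 0 ≤ I t) (hR : ∀ t, 0 ≤ t → 0 ≤ R t)
    (hode : ∀ t, 0 ≤ t →
      deriv S t = Λ - μ * S t - β * (1 - σ) * S t * I t + ξ * R t)
    (hS0 : 0 ≤ S 0) :
    ∀ t, 0 ≤ t → 0 ≤ S t := by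
  intro t ht
  by_contra hneg
  push_neg at hneg
  have hcont : Continuous S := hS.continuous
  set A := {s : ℝ | s ∈ Set.Icc 0 t ∧ 0 ≤ S s} with hA
  have h0A : (0:ℝ) ∈ A := ⟨⟨le_refl 0, ht⟩, hS0⟩
  have hbdd : BddAbove A := ⟨t, fun s hs => hs.1.2⟩
  set u := sSup A with hu
  have hu0 : 0 ≤ u := le_csSup hbdd h0A
  have hut' : u ≤ t := csSup_le ⟨0, h0A⟩ (fun s hs => hs.1.2)
  have hSu : 0 ≤ S u := by
    have hmem : u ∈ closure A := csSup_mem_closure ⟨0, h0A⟩ hbdd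
    have hcl : closure A ⊆ {s | 0 ≤ S s} :=
      closure_minimal (fun s hs => hs.2) (isClosed_le continuous_const hcont)
    exact hcl hmem
  have hut : u < t :=
    lt_of_le_of_ne hut' (fun h => absurd (h ▸ hSu) (not_le.mpr hneg))
  have hSneg : ∀ s, u < s → s ≤ t → S s < 0 := by
    intro s hus hst
    by_contra h
    push_neg at h
    exact absurd (le_csSup hbdd ⟨⟨le_trans hu0 hus.le, hst⟩, h⟩) (not_le.mpr hus)
  have hSu0 : S u = 0 := by
    rcases eq_or_lt_of_le hSu with h | h
    · exact h.symm
    · exfalso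
      have hev : ∀ᶠ s in nhdsWithin u (Set.Ioi u), 0 < S s ∧ s < t := by
        filter_upwards [eventually_nhdsWithin_of_eventually_nhds
          (ContinuousAt.eventually_lt continuousAt_const hcont.continuousAt h),
          eventually_nhdsWithin_of_eventually_nhds
          (Filter.Tendsto.eventually_lt_const hut (Filter.tendsto_id (x := nhds u)))] with s h1 h2
        exact ⟨h1, h2⟩
      obtain ⟨s, hs, hus⟩ := (hev.and self_mem_nhdsWithin).exists
      exact absurd (le_csSup hbdd ⟨⟨le_trans hu0 (le_of_lt hus), hs.2.le⟩, hs.1.le⟩)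
        (not_le.mpr hus)
  have hmono : MonotoneOn S (Set.Icc u t) := by
    apply monotoneOn_of_deriv_nonneg (convex_Icc u t) hcont.continuousOn
    · intro s _
      exact ((hS.differentiable one_ne_zero) s).differentiableWithinAt
    · intro s hs
      rw [interior_Icc] at hs
      have hs0 : 0 ≤ s := le_trans hu0 hs.1.le
      have hSs : S s < 0 := hSneg s hs.1 hs.2.le
      rw [hode s hs0]
      have h1 : 0 ≤ ξ * R s := mul_nonneg hξ (hR s hs0)
      have h2 : 0 ≤ β * (1 - σ) * I s := by
        have h1σ : 0 ≤ 1 - σ := by linarith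
        exact mul_nonneg (mul_nonneg hβ h1σ) (hI s hs0)
      nlinarith [hI s hs0, mul_nonneg hμ (le_of_lt (neg_pos.mpr hSs)),
        mul_nonneg h2 (le_of_lt (neg_pos.mpr hSs))]
  have := hmono ⟨le_rfl, hut.le⟩ ⟨hut.le, le_rfl⟩ hut.le
  rw [hSu0] at this
  exact absurd this (not_le.mpr hneg)
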